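/- arXiv:2008.11051 — 2 statements merged into one kernel-verified Lean document; each statement's English description precedes it below -/
import Mathlib

section
/- Assume that Σ_{i=−1}^∞ Aᵢ is stochastic (row sums equal to 1) and that the minimal nonnegative solution G of X = Σ_{i=0}^∞ A_{i−1} Xⁱ is stochastic (in the paper this holds when the drift μ is nonpositive). Let {X_k}_{k≥0} be any sequence of m×m matrices such that X₀ is stochastic and, for every k ≥ 0, X_{k+1} is a stochastic solution of the matrix equation X = Σ_{ℓ=−1}^q A_ℓ(X_k) X^{ℓ+1}. Then every X_k is stochastic and X_k converges entrywise to G as k → ∞. -/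
open Matrix

/-- Entrywise order on square real matrices. -/
def Mle {m : ℕ} (X Y : Matrix (Fin m) (Fin m) ℝ) : Prop := ∀ i j, X i j ≤ Y i j

/-- A stochastic matrix: nonnegative with unit row sums. -/
def IsStoch {m : ℕ} (X : Matrix (Fin m) (Fin m) ℝ) : Prop :=
  Mle 0 X ∧ ∀ r, ∑ c, X r c = 1

/-- `G` is the minimal nonnegative solution of `X = ∑_{i=0}^∞ A_{i-1} Xⁱ`. -/
def IsMinSol {m : ℕ} (A : ℕ → Matrix (Fin m) (Fin m) ℝ)
    (G : Matrix (Fin m) (Fin m) ℝ) : Prop :=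
  Mle 0 G ∧ Summable (fun i => A i * G ^ i) ∧ G = ∑' i, A i * G ^ i ∧
    ∀ Y, Mle 0 Y → Summable (fun i => A i * Y ^ i) → Y = ∑' i, A i * Y ^ i → Mle G Y

namespace S15
variable {m : ℕ}

lemma mul_nonneg' {A B : Matrix (Fin m) (Fin m) ℝ} (hA : Mle 0 A) (hB : Mle 0 B) :
    Mle 0 (A * B) := by
  intro i j
  simp only [Matrix.mul_apply, Matrix.zero_apply]
  exact Finset.sum_nonneg fun k _ => mul_nonneg (hA i k) (hB k j)

lemma mul_mono {A A' B B' : Matrix (Fin m) (Fin m) ℝ} (hA : Mle 0 A) (hAB : Mle A A')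
    (hB : Mle 0 B) (hBB : Mle B B') : Mle (A * B) (A' * B') := by
  intro i j
  simp only [Matrix.mul_apply]
  exact Finset.sum_le_sum fun k _ => mul_le_mul (hAB i k) (hBB k j) (hB k j)
    (le_trans (hA i k) (hAB i k))

lemma pow_nonneg' {A : Matrix (Fin m) (Fin m) ℝ} (hA : Mle 0 A) : ∀ i, Mle 0 (A ^ i) := by
  intro i
  induction i with
  | zero => intro r c; simp [pow_zero, Matrix.one_apply]; split <;> norm_num
  | succ n ih => rw [pow_succ]; exact mul_nonneg' ih hA

lemma pow_mono {A B : Matrix (Fin m) (Fin m) ℝ} (hA : Mle 0 A) (hAB : Mle A B) :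
    ∀ i, Mle (A ^ i) (B ^ i) := by
  intro i
  induction i with
  | zero => intro r c; simp
  | succ n ih => rw [pow_succ, pow_succ]; exact mul_mono (pow_nonneg' hA n) ih hA hAB

lemma summable_entry {ι : Type*} {f : ι → Matrix (Fin m) (Fin m) ℝ} (hf : Summable f)
    (r c : Fin m) : Summable fun n => f n r c :=
  (Pi.summable.mp ((Pi.summable.mp hf) r)) c

lemma tsum_entry {ι : Type*} {f : ι → Matrix (Fin m) (Fin m) ℝ} (hf : Summable f)
    (r c : Fin m) : (∑' n, f n) r c = ∑' n, f n r c := by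
  have h1 : (∑' n, f n) r = ∑' n, f n r := tsum_apply hf
  rw [h1, tsum_apply (Pi.summable.mp hf r)]

lemma summable_of_mle {f g : ℕ → Matrix (Fin m) (Fin m) ℝ} (h0 : ∀ n, Mle 0 (f n))
    (hle : ∀ n, Mle (f n) (g n)) (hg : Summable g) : Summable f := by
  refine Pi.summable.mpr ?_; intro r; rw [Pi.summable]; intro c
  exact Summable.of_nonneg_of_le (fun n => h0 n r c) (fun n => hle n r c)
    (summable_entry hg r c)

lemma tsum_mle {f g : ℕ → Matrix (Fin m) (Fin m) ℝ} (hf : Summable f) (hg : Summable g)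
    (hle : ∀ n, Mle (f n) (g n)) : Mle (∑' n, f n) (∑' n, g n) := by
  intro r c
  rw [tsum_entry hf, tsum_entry hg]
  exact Summable.tsum_le_tsum (fun n => hle n r c) (summable_entry hf r c) (summable_entry hg r c)

lemma tsum_nonneg' {f : ℕ → Matrix (Fin m) (Fin m) ℝ} (hf : Summable f)
    (h0 : ∀ n, Mle 0 (f n)) : Mle 0 (∑' n, f n) := by
  intro r c
  rw [tsum_entry hf]
  exact tsum_nonneg fun n => h0 n r c

lemma sum_mle {s : Finset ℕ} {f g : ℕ → Matrix (Fin m) (Fin m) ℝ}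
    (h : ∀ ℓ ∈ s, Mle (f ℓ) (g ℓ)) : Mle (∑ ℓ ∈ s, f ℓ) (∑ ℓ ∈ s, g ℓ) := by
  intro r c
  simp only [Matrix.sum_apply]
  exact Finset.sum_le_sum fun ℓ hℓ => h ℓ hℓ r c

lemma key_eq {p : ℕ} (A : ℕ → Matrix (Fin m) (Fin m) ℝ)
    (Aℓ : ℕ → ℕ → Matrix (Fin m) (Fin m) ℝ)
    (hcompat : ∀ i, A i = ∑ ℓ ∈ Finset.range (p + 1),
      if ℓ ≤ i then Aℓ ℓ (i - ℓ) else 0)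
    (Y : Matrix (Fin m) (Fin m) ℝ)
    (hΦ : ∀ ℓ, Summable fun i => Aℓ ℓ i * Y ^ i) :
    ∑' i, A i * Y ^ i
      = ∑ ℓ ∈ Finset.range (p + 1), (∑' i, Aℓ ℓ i * Y ^ i) * Y ^ ℓ := by
  set g : ℕ → ℕ → Matrix (Fin m) (Fin m) ℝ :=
    fun ℓ i => (if ℓ ≤ i then Aℓ ℓ (i - ℓ) else 0) * Y ^ i with hg
  have hinj : ∀ ℓ : ℕ, Function.Injective (fun j : ℕ => j + ℓ) :=
    fun ℓ => add_left_injective ℓ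
  have hcomp : ∀ ℓ, (g ℓ) ∘ (fun j : ℕ => j + ℓ) = fun j => (Aℓ ℓ j * Y ^ j) * Y ^ ℓ := by
    intro ℓ
    funext j
    simp only [Function.comp_apply, hg, Nat.le_add_left, if_true, Nat.add_sub_cancel,
      pow_add, mul_assoc]
  have hsupp : ∀ ℓ, ∀ i ∉ Set.range (fun j : ℕ => j + ℓ), g ℓ i = 0 := by
    intro ℓ i hi
    have : ¬ ℓ ≤ i := by
      intro hle
      exact hi ⟨i - ℓ, Nat.sub_add_cancel hle⟩
    simp [hg, this]
  have hgsum : ∀ ℓ, Summable (g ℓ) := by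
    intro ℓ
    refine (Function.Injective.summable_iff (hinj ℓ) (hsupp ℓ)).mp ?_
    rw [hcomp ℓ]
    exact (hΦ ℓ).mul_right _
  have htsum : ∀ ℓ, ∑' i, g ℓ i = (∑' i, Aℓ ℓ i * Y ^ i) * Y ^ ℓ := by
    intro ℓ
    have h1 : ∑' j, g ℓ (j + ℓ) = ∑' i, g ℓ i := by
      refine Function.Injective.tsum_eq (hinj ℓ) ?_
      intro i hi
      by_contra h
      exact hi (hsupp ℓ i h)
    have h2 : (fun j => g ℓ (j + ℓ)) = fun j => (Aℓ ℓ j * Y ^ j) * Y ^ ℓ := hcomp ℓ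
    rw [← h1, h2, Summable.tsum_mul_right _ (hΦ ℓ)]
  calc ∑' i, A i * Y ^ i = ∑' i, ∑ ℓ ∈ Finset.range (p + 1), g ℓ i := by
        congr 1
        funext i
        rw [hcompat i, Finset.sum_mul]
    _ = ∑ ℓ ∈ Finset.range (p + 1), ∑' i, g ℓ i := Summable.tsum_finsetSum (fun ℓ _ => hgsum ℓ)
    _ = ∑ ℓ ∈ Finset.range (p + 1), (∑' i, Aℓ ℓ i * Y ^ i) * Y ^ ℓ :=
        Finset.sum_congr rfl fun ℓ _ => htsum ℓ

end S15

/-- Theorem 5.1: convergence with a stochastic starting matrix.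
Here `A i` denotes `A_{i-1}`, `p = q+1 ≥ 0`, `Aℓ ℓ' i` denotes `A_{ℓ'-1, i}`. -/
theorem stmt15 (m : ℕ) (hm : 1 ≤ m) (p : ℕ)
    (A : ℕ → Matrix (Fin m) (Fin m) ℝ)
    (Aℓ : ℕ → ℕ → Matrix (Fin m) (Fin m) ℝ)
    (hA0 : ∀ i, Mle 0 (A i)) (hAℓ0 : ∀ ℓ i, Mle 0 (Aℓ ℓ i))
    (hsum : Summable A)
    -- `∑ Aᵢ` is stochastic:
    (hstoch : ∀ r, ∑ c, (∑' i, A i) r c = 1)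
    (hcompat : ∀ i, A i = ∑ ℓ ∈ Finset.range (p + 1),
      if ℓ ≤ i then Aℓ ℓ (i - ℓ) else 0)
    -- all series occurring converge entrywise:
    (hAf : ∀ ℓ (X : Matrix (Fin m) (Fin m) ℝ), Mle 0 X → (∀ r, ∑ c, X r c ≤ 1) →
      Summable (fun i => Aℓ ℓ i * X ^ i))
    (G : Matrix (Fin m) (Fin m) ℝ) (hG : IsMinSol A G) (hGst : IsStoch G)
    (X : ℕ → Matrix (Fin m) (Fin m) ℝ)
    (hX0 : IsStoch (X 0))
    -- `X_{k+1}` is a stochastic solution of `X = ∑_{ℓ=-1}^q A_ℓ(X_k) X^{ℓ+1}`: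
    (hXk : ∀ k, IsStoch (X (k + 1)) ∧
      X (k + 1) = ∑ ℓ ∈ Finset.range (p + 1),
        (∑' i, Aℓ ℓ i * (X k) ^ i) * (X (k + 1)) ^ ℓ) :
    (∀ k, IsStoch (X k)) ∧ Filter.Tendsto X Filter.atTop (nhds G) := by
  obtain ⟨hGpos, hGsum, hGeq, hGmin⟩ := hG
  have stoch : ∀ k, IsStoch (X k) := by
    intro k
    cases k with
    | zero => exact hX0
    | succ k => exact (hXk k).1
  refine ⟨stoch, ?_⟩
  -- the natural iteration from 0
  set Z : ℕ → Matrix (Fin m) (Fin m) ℝ :=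
    fun k => Nat.rec 0 (fun _ Zk => ∑' i, A i * Zk ^ i) k with hZdef
  have hZ0 : Z 0 = 0 := rfl
  have hZs : ∀ k, Z (k + 1) = ∑' i, A i * Z k ^ i := fun k => rfl
  -- nonnegativity and domination by G
  have hZG : ∀ k, Mle 0 (Z k) ∧ Mle (Z k) G := by
    intro k
    induction k with
    | zero => exact ⟨by rw [hZ0]; exact fun i j => le_rfl, by rw [hZ0]; exact hGpos⟩
    | succ k ih =>
      obtain ⟨h0, hle⟩ := ih
      have term0 : ∀ i, Mle 0 (A i * Z k ^ i) :=
        fun i => S15.mul_nonneg' (hA0 i) (S15.pow_nonneg' h0 i)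
      have termle : ∀ i, Mle (A i * Z k ^ i) (A i * G ^ i) :=
        fun i => S15.mul_mono (hA0 i) (fun r c => le_rfl) (S15.pow_nonneg' h0 i)
          (S15.pow_mono h0 hle i)
      have hsumZ : Summable (fun i => A i * Z k ^ i) :=
        S15.summable_of_mle term0 termle hGsum
      constructor
      · rw [hZs]; exact S15.tsum_nonneg' hsumZ term0
      · rw [hZs]
        have := S15.tsum_mle hsumZ hGsum termle
        rwa [← hGeq] at this
  have hsumZ : ∀ k, Summable (fun i => A i * Z k ^ i) := by
    intro k
    exact S15.summable_of_mle
      (fun i => S15.mul_nonneg' (hA0 i) (S15.pow_nonneg' (hZG k).1 i))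
      (fun i => S15.mul_mono (hA0 i) (fun r c => le_rfl) (S15.pow_nonneg' (hZG k).1 i)
        (S15.pow_mono (hZG k).1 (hZG k).2 i)) hGsum
  -- row sums of Z k are ≤ 1
  have hZrow : ∀ k r, ∑ c, Z k r c ≤ 1 := by
    intro k r
    calc ∑ c, Z k r c ≤ ∑ c, G r c := Finset.sum_le_sum fun c _ => (hZG k).2 r c
      _ = 1 := hGst.2 r
  have hΦ : ∀ k ℓ, Summable fun i => Aℓ ℓ i * Z k ^ i :=
    fun k ℓ => hAf ℓ (Z k) (hZG k).1 (hZrow k)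
  -- monotonicity of Z
  have hZmono : ∀ k, Mle (Z k) (Z (k + 1)) := by
    intro k
    induction k with
    | zero =>
      rw [hZ0, hZs]
      exact S15.tsum_nonneg' (hsumZ 0)
        (fun i => S15.mul_nonneg' (hA0 i) (S15.pow_nonneg' (hZG 0).1 i))
    | succ k ih =>
      rw [hZs k, hZs (k + 1)]
      exact S15.tsum_mle (hsumZ k) (hsumZ (k + 1))
        (fun i => S15.mul_mono (hA0 i) (fun r c => le_rfl) (S15.pow_nonneg' (hZG k).1 i)
          (S15.pow_mono (hZG k).1 ih i))
  -- Z k ≤ X n for all n ≥ k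
  have hZX : ∀ k n, k ≤ n → Mle (Z k) (X n) := by
    intro k
    induction k with
    | zero => intro n _; rw [hZ0]; exact (stoch n).1
    | succ k ih =>
      intro n hn
      cases n with
      | zero => omega
      | succ n' =>
        have hkn : k ≤ n' := by omega
        rw [hZs, S15.key_eq A Aℓ hcompat (Z k) (hΦ k), (hXk n').2]
        refine S15.sum_mle ?_
        intro ℓ _
        refine S15.mul_mono ?_ ?_ ?_ ?_
        · exact S15.tsum_nonneg' (hΦ k ℓ)
            (fun i => S15.mul_nonneg' (hAℓ0 ℓ i) (S15.pow_nonneg' (hZG k).1 i))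
        · refine S15.tsum_mle (hΦ k ℓ)
            (hAf ℓ (X n') (stoch n').1 (fun r => le_of_eq ((stoch n').2 r))) ?_
          exact fun i => S15.mul_mono (hAℓ0 ℓ i) (fun r c => le_rfl)
            (S15.pow_nonneg' (hZG k).1 i) (S15.pow_mono (hZG k).1 (ih n' hkn) i)
        · exact S15.pow_nonneg' (hZG k).1 ℓ
        · exact S15.pow_mono (hZG k).1 (ih (n' + 1) (by omega)) ℓ
  -- the limit of Z
  set L : Matrix (Fin m) (Fin m) ℝ := fun r c => ⨆ k, Z k r c with hLdef
  have hbdd : ∀ r c, BddAbove (Set.range fun k => Z k r c) :=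
    fun r c => ⟨G r c, by rintro x ⟨k, rfl⟩; exact (hZG k).2 r c⟩
  have hmono' : ∀ r c, Monotone fun k => Z k r c :=
    fun r c => monotone_nat_of_le_succ fun k => hZmono k r c
  have hZL : ∀ r c, Filter.Tendsto (fun k => Z k r c) Filter.atTop (nhds (L r c)) :=
    fun r c => tendsto_atTop_ciSup (hmono' r c) (hbdd r c)
  have hL0 : Mle 0 L := by
    intro r c
    have h := le_ciSup (hbdd r c) 0
    simpa [hZ0] using h
  have hLG : Mle L G := fun r c => ciSup_le fun k => (hZG k).2 r c
  have hsumL : Summable (fun i => A i * L ^ i) :=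
    S15.summable_of_mle
      (fun i => S15.mul_nonneg' (hA0 i) (S15.pow_nonneg' hL0 i))
      (fun i => S15.mul_mono (hA0 i) (fun r c => le_rfl) (S15.pow_nonneg' hL0 i)
        (S15.pow_mono hL0 hLG i)) hGsum
  have hZtend : Filter.Tendsto Z Filter.atTop (nhds L) := by
    apply tendsto_pi_nhds.mpr
    intro r
    apply tendsto_pi_nhds.mpr
    intro c
    exact hZL r c
  -- L solves the equation
  have hLsol : L = ∑' i, A i * L ^ i := by
    ext r c
    have h1 : Filter.Tendsto (fun k => Z (k + 1) r c) Filter.atTop (nhds (L r c)) :=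
      (hZL r c).comp (Filter.tendsto_add_atTop_nat 1)
    have h2 : Filter.Tendsto (fun k => Z (k + 1) r c) Filter.atTop
        (nhds ((∑' i, A i * L ^ i) r c)) := by
      have heq : ∀ k, Z (k + 1) r c = ∑' i, (A i * Z k ^ i) r c := by
        intro k
        rw [hZs, S15.tsum_entry (hsumZ k)]
      rw [S15.tsum_entry hsumL]
      simp only [heq]
      refine tendsto_tsum_of_dominated_convergence
        (bound := fun i => (A i * G ^ i) r c) (S15.summable_entry hGsum r c) ?_ ?_
      · intro i
        have hti : Filter.Tendsto (fun k => A i * Z k ^ i) Filter.atTop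
            (nhds (A i * L ^ i)) := (hZtend.pow i).const_mul (A i)
        exact tendsto_pi_nhds.mp (tendsto_pi_nhds.mp hti r) c
      · filter_upwards with k i
        rw [Real.norm_eq_abs, abs_of_nonneg
          (S15.mul_nonneg' (hA0 i) (S15.pow_nonneg' (hZG k).1 i) r c)]
        exact S15.mul_mono (hA0 i) (fun r c => le_rfl) (S15.pow_nonneg' (hZG k).1 i)
          (S15.pow_mono (hZG k).1 (hZG k).2 i) r c
    exact tendsto_nhds_unique h1 h2
  have hGL : Mle G L := hGmin L hL0 hsumL hLsol
  have hLeqG : L = G := by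
    ext r c
    exact le_antisymm (hLG r c) (hGL r c)
  have hZGt : ∀ r c, Filter.Tendsto (fun k => Z k r c) Filter.atTop (nhds (G r c)) := by
    intro r c
    rw [← hLeqG]
    exact hZL r c
  -- final squeeze
  apply tendsto_pi_nhds.mpr
  intro r
  apply tendsto_pi_nhds.mpr
  intro c
  have hs : Filter.Tendsto (fun n => ∑ c', Z n r c') Filter.atTop (nhds 1) := by
    have h := tendsto_finset_sum (Finset.univ : Finset (Fin m))
      (fun c' _ => hZGt r c')
    rwa [hGst.2 r] at h
  have upper : ∀ n, X n r c ≤ G r c + (1 - ∑ c', Z n r c') := by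
    intro n
    have h1 : X n r c - Z n r c ≤ ∑ c', (X n r c' - Z n r c') :=
      Finset.single_le_sum (f := fun c' => X n r c' - Z n r c')
        (fun c' _ => sub_nonneg.mpr (hZX n n le_rfl r c')) (Finset.mem_univ c)
    have h2 : ∑ c', (X n r c' - Z n r c') = 1 - ∑ c', Z n r c' := by
      rw [Finset.sum_sub_distrib, (stoch n).2 r]
    have h3 : X n r c ≤ Z n r c + (1 - ∑ c', Z n r c') := by linarith [h1, h2 ▸ h1]
    have h4 : Z n r c ≤ G r c := (hZG n).2 r c
    linarith
  have lower : ∀ n, Z n r c ≤ X n r c := fun n => hZX n n le_rfl r c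
  have hupper : Filter.Tendsto (fun n => G r c + (1 - ∑ c', Z n r c')) Filter.atTop
      (nhds (G r c)) := by
    have h := tendsto_const_nhds (x := G r c) (f := Filter.atTop (α := ℕ))
    have h2 := h.add ((tendsto_const_nhds (x := (1:ℝ))).sub hs)
    simpa using h2
  exact tendsto_of_tendsto_of_tendsto_of_le_of_le (hZGt r c) hupper lower upper
end

section
/- Let G, X_k, X_{k+1} be m×m matrices (with all series below convergent entrywise) such that G = Σ_{ℓ=−1}^q A_ℓ(G) G^{ℓ+1} and X_{k+1} = Σ_{ℓ=−1}^q A_ℓ(X_k) X_{k+1}^{ℓ+1}. Then (I_{m²} − Q(X_k, X_{k+1}))·vec(G − X_{k+1}) = P(X_k)·vec(G − X_k), where Q(X,Y) = Σ_{ℓ=0}^q Σ_{s=0}^ℓ (G^s)ᵀ ⊗ (A_ℓ(X) Y^{ℓ−s}) and P(X) = Σ_{ℓ=−1}^q Σ_{i=1}^∞ Σ_{s=ℓ+1}^{ℓ+i} (G^s)ᵀ ⊗ (A_{ℓ,i} X^{i+ℓ−s}). -/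
open Matrix Kronecker

/-- `vec(C)`: the columns of `C` stacked, so that `vec(AXB) = (Bᵀ ⊗ A) vec(X)`. -/
def vecM {m : ℕ} (C : Matrix (Fin m) (Fin m) ℝ) : Fin m × Fin m → ℝ :=
  fun pr => C pr.2 pr.1

/-- `Q(X,Y) = ∑_{ℓ=0}^q ∑_{s=0}^ℓ (G^s)ᵀ ⊗ (A_ℓ(X) Y^{ℓ-s})` (shifted index
`ℓ' = ℓ+1 ∈ {0,…,p}`, `p = q+1`). -/
noncomputable def Qmat {m : ℕ} (p : ℕ) (Aℓ : ℕ → ℕ → Matrix (Fin m) (Fin m) ℝ)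
    (G X Y : Matrix (Fin m) (Fin m) ℝ) :
    Matrix (Fin m × Fin m) (Fin m × Fin m) ℝ :=
  ∑ ℓ ∈ Finset.range (p + 1), ∑ s ∈ Finset.range ℓ,
    (G ^ s)ᵀ ⊗ₖ ((∑' i, Aℓ ℓ i * X ^ i) * Y ^ (ℓ - 1 - s))

/-- `P(X) = ∑_{ℓ=-1}^q ∑_{i=1}^∞ ∑_{s=ℓ+1}^{ℓ+i} (G^s)ᵀ ⊗ (A_{ℓ,i} X^{i+ℓ-s})`
(shifted index). -/
noncomputable def Pmat {m : ℕ} (p : ℕ) (Aℓ : ℕ → ℕ → Matrix (Fin m) (Fin m) ℝ)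
    (G X : Matrix (Fin m) (Fin m) ℝ) :
    Matrix (Fin m × Fin m) (Fin m × Fin m) ℝ :=
  ∑ ℓ ∈ Finset.range (p + 1), ∑' i : ℕ,
    ∑ s ∈ Finset.Ico ℓ (ℓ + i + 1), (G ^ s)ᵀ ⊗ₖ (Aℓ ℓ (i + 1) * X ^ (ℓ + i - s))

/-- Noncommutative telescoping identity. -/
lemma pow_sub_pow' {R : Type*} [Ring R] (a b : R) (n : ℕ) :
    a ^ n - b ^ n = ∑ j ∈ Finset.range n, b ^ j * (a - b) * a ^ (n - 1 - j) := by
  induction n with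
  | zero => simp
  | succ n ih =>
    rw [Finset.sum_range_succ]
    have h1 : ∀ j ∈ Finset.range n, b ^ j * (a - b) * a ^ (n + 1 - 1 - j)
        = (b ^ j * (a - b) * a ^ (n - 1 - j)) * a := by
      intro j hj
      rw [Finset.mem_range] at hj
      have he : n + 1 - 1 - j = (n - 1 - j) + 1 := by omega
      rw [he, pow_succ]; noncomm_ring
    rw [Finset.sum_congr rfl h1, ← Finset.sum_mul, ← ih]
    have : n + 1 - 1 - n = 0 := by omega
    rw [this, pow_zero, mul_one, pow_succ, pow_succ]
    noncomm_ring

lemma kron_mulVec {m : ℕ} (A B X : Matrix (Fin m) (Fin m) ℝ) :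
    (Bᵀ ⊗ₖ A) *ᵥ vecM X = vecM (A * X * B) := by
  funext pr
  obtain ⟨p1, p2⟩ := pr
  simp only [vecM, Matrix.mulVec, dotProduct, Matrix.kroneckerMap_apply,
    Matrix.transpose_apply, Matrix.mul_apply, Fintype.sum_prod_type,
    Finset.sum_mul, Finset.mul_sum]
  apply Finset.sum_congr rfl; intro q2 _
  apply Finset.sum_congr rfl; intro q1 _
  ring

/-- `vecM` as a continuous linear map. -/
noncomputable def vecL (m : ℕ) : Matrix (Fin m) (Fin m) ℝ →L[ℝ] (Fin m × Fin m → ℝ) :=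
  { toFun := vecM
    map_add' := fun A B => rfl
    map_smul' := fun c A => rfl
    cont := by
      apply continuous_pi
      intro pr
      exact (continuous_apply pr.1).comp (continuous_apply pr.2) }

@[simp] lemma vecL_apply {m : ℕ} (A : Matrix (Fin m) (Fin m) ℝ) : vecL m A = vecM A := rfl

/-- `M ↦ M *ᵥ v` as a continuous linear map. -/
noncomputable def mulVecL (m : ℕ) (v : Fin m × Fin m → ℝ) :
    Matrix (Fin m × Fin m) (Fin m × Fin m) ℝ →L[ℝ] (Fin m × Fin m → ℝ) :=
  { toFun := fun M => M *ᵥ v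
    map_add' := fun A B => Matrix.add_mulVec A B v
    map_smul' := fun c A => Matrix.smul_mulVec c A v
    cont := by
      apply continuous_pi
      intro x
      show Continuous fun M : Matrix (Fin m × Fin m) (Fin m × Fin m) ℝ => ∑ y, M x y * v y
      exact continuous_finset_sum _ fun y _ =>
        ((Continuous.matrix_elem continuous_id x y).mul continuous_const) }

@[simp] lemma mulVecL_apply {m : ℕ} (v : Fin m × Fin m → ℝ)
    (M : Matrix (Fin m × Fin m) (Fin m × Fin m) ℝ) : mulVecL m v M = M *ᵥ v := rfl

lemma vecM_sum {m : ℕ} {ι : Type*} (s : Finset ι) (f : ι → Matrix (Fin m) (Fin m) ℝ) :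
    vecM (∑ x ∈ s, f x) = ∑ x ∈ s, vecM (f x) :=
  map_sum (vecL m).toLinearMap f s

lemma vecM_sub {m : ℕ} (A B : Matrix (Fin m) (Fin m) ℝ) :
    vecM (A - B) = vecM A - vecM B := rfl

/-- equation (5.2) of the paper:
`(I - Q(X_k, X_{k+1})) vec(G - X_{k+1}) = P(X_k) vec(G - X_k)`. -/
theorem stmt16 (m : ℕ) (hm : 1 ≤ m) (p : ℕ)
    (Aℓ : ℕ → ℕ → Matrix (Fin m) (Fin m) ℝ)
    (G Xk Xk1 : Matrix (Fin m) (Fin m) ℝ)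
    -- all series occurring converge entrywise:
    (hsG : ∀ ℓ, Summable (fun i => Aℓ ℓ i * G ^ i))
    (hsX : ∀ ℓ, Summable (fun i => Aℓ ℓ i * Xk ^ i))
    (hsS : ∀ ℓ, Summable (fun i =>
      Aℓ ℓ (i + 1) *
        ∑ j ∈ Finset.range (i + 1), Xk ^ j * (G - Xk) * G ^ (i - j + ℓ)))
    (hsP : ∀ ℓ, Summable (fun i =>
      ∑ s ∈ Finset.Ico ℓ (ℓ + i + 1), (G ^ s)ᵀ ⊗ₖ (Aℓ ℓ (i + 1) * Xk ^ (ℓ + i - s))))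
    -- `G = ∑_{ℓ=-1}^q A_ℓ(G) G^{ℓ+1}` :
    (hGeq : G = ∑ ℓ ∈ Finset.range (p + 1), (∑' i, Aℓ ℓ i * G ^ i) * G ^ ℓ)
    -- `X_{k+1} = ∑_{ℓ=-1}^q A_ℓ(X_k) X_{k+1}^{ℓ+1}` :
    (hXeq : Xk1 = ∑ ℓ ∈ Finset.range (p + 1), (∑' i, Aℓ ℓ i * Xk ^ i) * Xk1 ^ ℓ) :
    ((1 : Matrix (Fin m × Fin m) (Fin m × Fin m) ℝ) - Qmat p Aℓ G Xk Xk1) *ᵥ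
        vecM (G - Xk1) =
      Pmat p Aℓ G Xk *ᵥ vecM (G - Xk) := by
  -- telescoping for the Q-part
  have key3 : ∀ ℓ : ℕ, ∑ s ∈ Finset.range ℓ,
      ((∑' i, Aℓ ℓ i * Xk ^ i) * Xk1 ^ (ℓ - 1 - s)) * (G - Xk1) * G ^ s
      = (∑' i, Aℓ ℓ i * Xk ^ i) * (G ^ ℓ - Xk1 ^ ℓ) := by
    intro ℓ
    rw [pow_sub_pow' G Xk1 ℓ, Finset.mul_sum,
      ← Finset.sum_range_reflect
        (fun j => (∑' i, Aℓ ℓ i * Xk ^ i) * (Xk1 ^ j * (G - Xk1) * G ^ (ℓ - 1 - j))) ℓ]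
    apply Finset.sum_congr rfl
    intro s hs
    rw [Finset.mem_range] at hs
    have h1 : ℓ - 1 - (ℓ - 1 - s) = s := by omega
    rw [h1]
    noncomm_ring
  -- Q *ᵥ vec(G - Xk1)
  have hQ : Qmat p Aℓ G Xk Xk1 *ᵥ vecM (G - Xk1)
      = vecM (∑ ℓ ∈ Finset.range (p + 1),
          (∑' i, Aℓ ℓ i * Xk ^ i) * (G ^ ℓ - Xk1 ^ ℓ)) := by
    rw [Qmat, vecM_sum, ← mulVecL_apply (v := vecM (G - Xk1)), map_sum]
    apply Finset.sum_congr rfl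
    intro ℓ _
    rw [map_sum]
    simp only [mulVecL_apply, kron_mulVec]
    rw [← vecM_sum, key3 ℓ]
  -- telescoping for the series part
  have key5 : ∀ ℓ i : ℕ, Aℓ ℓ (i + 1) * (G ^ (i + 1) - Xk ^ (i + 1)) * G ^ ℓ
      = Aℓ ℓ (i + 1) *
          ∑ j ∈ Finset.range (i + 1), Xk ^ j * (G - Xk) * G ^ (i - j + ℓ) := by
    intro ℓ i
    rw [pow_sub_pow' G Xk (i + 1), mul_assoc, Finset.sum_mul]
    congr 1
    apply Finset.sum_congr rfl
    intro j hj
    rw [Finset.mem_range] at hj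
    have h1 : i + 1 - 1 - j = i - j := by omega
    rw [h1, mul_assoc (Xk ^ j * (G - Xk)), ← pow_add]
  -- per-ℓ series identity
  have key6 : ∀ ℓ : ℕ,
      (∑' i, Aℓ ℓ i * G ^ i) * G ^ ℓ - (∑' i, Aℓ ℓ i * Xk ^ i) * Xk1 ^ ℓ
        - (∑' i, Aℓ ℓ i * Xk ^ i) * (G ^ ℓ - Xk1 ^ ℓ)
      = ∑' i, Aℓ ℓ (i + 1) *
          ∑ j ∈ Finset.range (i + 1), Xk ^ j * (G - Xk) * G ^ (i - j + ℓ) := by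
    intro ℓ
    have e0 : (∑' i, Aℓ ℓ i * G ^ i) * G ^ ℓ - (∑' i, Aℓ ℓ i * Xk ^ i) * Xk1 ^ ℓ
        - (∑' i, Aℓ ℓ i * Xk ^ i) * (G ^ ℓ - Xk1 ^ ℓ)
        = ((∑' i, Aℓ ℓ i * G ^ i) - (∑' i, Aℓ ℓ i * Xk ^ i)) * G ^ ℓ := by
      noncomm_ring
    have hsub : Summable (fun i => Aℓ ℓ i * G ^ i - Aℓ ℓ i * Xk ^ i) :=
      (hsG ℓ).sub (hsX ℓ)
    rw [e0, ← Summable.tsum_sub (hsG ℓ) (hsX ℓ), ← hsub.tsum_mul_right (G ^ ℓ)]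
    have hf : Summable (fun i => (Aℓ ℓ i * G ^ i - Aℓ ℓ i * Xk ^ i) * G ^ ℓ) :=
      hsub.mul_right _
    rw [Summable.tsum_eq_zero_add hf]
    simp only [pow_zero, mul_one, sub_self, zero_mul, zero_add]
    apply tsum_congr
    intro i
    rw [← mul_sub, key5 ℓ i]
  -- reindexing for the P-part
  have key7 : ∀ ℓ i : ℕ, ∑ s ∈ Finset.Ico ℓ (ℓ + i + 1),
      (Aℓ ℓ (i + 1) * Xk ^ (ℓ + i - s)) * (G - Xk) * G ^ s
      = Aℓ ℓ (i + 1) *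
          ∑ j ∈ Finset.range (i + 1), Xk ^ j * (G - Xk) * G ^ (i - j + ℓ) := by
    intro ℓ i
    rw [Finset.sum_Ico_eq_sum_range]
    have hr : ℓ + i + 1 - ℓ = i + 1 := by omega
    rw [hr, Finset.mul_sum,
      ← Finset.sum_range_reflect
        (fun j => Aℓ ℓ (i + 1) * (Xk ^ j * (G - Xk) * G ^ (i - j + ℓ))) (i + 1)]
    apply Finset.sum_congr rfl
    intro j hj
    rw [Finset.mem_range] at hj
    have e1 : ℓ + i - (ℓ + j) = i - j := by omega
    have e2 : i + 1 - 1 - j = i - j := by omega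
    rw [e1, e2]
    have e3 : i - (i - j) + ℓ = ℓ + j := by omega
    rw [e3]
    noncomm_ring
  -- assemble the left-hand side
  rw [Matrix.sub_mulVec, Matrix.one_mulVec, hQ, ← vecM_sub]
  have hGX : G - Xk1 = ∑ ℓ ∈ Finset.range (p + 1),
      ((∑' i, Aℓ ℓ i * G ^ i) * G ^ ℓ - (∑' i, Aℓ ℓ i * Xk ^ i) * Xk1 ^ ℓ) := by
    conv_lhs => rw [hGeq, hXeq]
    rw [← Finset.sum_sub_distrib]
  rw [hGX, ← Finset.sum_sub_distrib,
    Finset.sum_congr rfl (fun ℓ _ => key6 ℓ)]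
  -- assemble the right-hand side
  rw [Pmat, ← mulVecL_apply (v := vecM (G - Xk)), map_sum, vecM_sum]
  apply Finset.sum_congr rfl
  intro ℓ _
  have l1 : vecM (∑' i, Aℓ ℓ (i + 1) *
        ∑ j ∈ Finset.range (i + 1), Xk ^ j * (G - Xk) * G ^ (i - j + ℓ))
      = ∑' i, vecM (Aℓ ℓ (i + 1) *
        ∑ j ∈ Finset.range (i + 1), Xk ^ j * (G - Xk) * G ^ (i - j + ℓ)) := by
    simpa using (vecL m).map_tsum (hsS ℓ)
  have l2 : mulVecL m (vecM (G - Xk)) (∑' i, ∑ s ∈ Finset.Ico ℓ (ℓ + i + 1),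
        (G ^ s)ᵀ ⊗ₖ (Aℓ ℓ (i + 1) * Xk ^ (ℓ + i - s)))
      = ∑' i, ∑ s ∈ Finset.Ico ℓ (ℓ + i + 1),
        ((G ^ s)ᵀ ⊗ₖ (Aℓ ℓ (i + 1) * Xk ^ (ℓ + i - s))) *ᵥ vecM (G - Xk) := by
    simpa using (mulVecL m (vecM (G - Xk))).map_tsum (hsP ℓ)
  rw [l1, l2]
  apply tsum_congr
  intro i
  simp only [kron_mulVec]
  rw [← vecM_sum, key7 ℓ i]
end
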